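/- (Separation from a cone, deterministic core) Let b, a_1, …, a_n ∈ ℝ^m be vectors of Euclidean norm 1 with b ∉ C, where C = cone{a_1, …, a_n}. Let d = min_{x ∈ C} ‖b − x‖, let p ∈ C be the nearest point of C to b, and let μ_A = max{‖x‖_A : x ∈ C, ‖x‖ ≤ 1}. Let ε ∈ (0,1) with ε ≤ d²/(μ_A² + 2·‖p‖·μ_A + 1), and let T : ℝ^m → ℝ^k be a linear map such that for all x, y ∈ {b, a_1, …, a_n}, both (1−ε)·‖x−y‖² ≤ ‖T(x−y)‖² ≤ (1+ε)·‖x−y‖² and (1−ε)·‖x+y‖² ≤ ‖T(x+y)‖² ≤ (1+ε)·‖x+y‖² hold. Then ‖T(b) − T(x)‖² > 0 for every x ∈ C; in particular, T(b) ∉ cone{T(a_1), …, T(a_n)}. -/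

import Mathlib

/-- The cone generated by vectors `v_1, …, v_n`: all non-negative linear combinations. -/
def coneOf {E : Type*} [AddCommMonoid E] [Module ℝ E] {n : ℕ} (v : Fin n → E) : Set E :=
  {x | ∃ lam : Fin n → ℝ, (∀ i, 0 ≤ lam i) ∧ x = ∑ i, lam i • v i}

/-- The `A`-norm of a point of `cone{a_1, …, a_n}`: the least possible sum of coefficients
over all representations as a non-negative linear combination of the generators. -/
noncomputable def normA {E : Type*} [AddCommMonoid E] [Module ℝ E] {n : ℕ}
    (a : Fin n → E) (x : E) : ℝ :=
  sInf {s | ∃ lam : Fin n → ℝ, (∀ i, 0 ≤ lam i) ∧ x = ∑ i, lam i • a i ∧ s = ∑ i, lam i}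

namespace ConeSepAux

variable {n : ℕ}

lemma zero_mem_coneOf {E : Type*} [AddCommGroup E] [Module ℝ E] (v : Fin n → E) :
    (0 : E) ∈ coneOf v :=
  ⟨0, fun _ => le_refl 0, by simp⟩

lemma smul_mem_coneOf {E : Type*} [AddCommGroup E] [Module ℝ E] {v : Fin n → E} {x : E}
    (hx : x ∈ coneOf v) {t : ℝ} (ht : 0 ≤ t) : t • x ∈ coneOf v := by
  obtain ⟨lam, hlam, hx⟩ := hx
  exact ⟨t • lam, fun i => mul_nonneg ht (hlam i), by
    simp [hx, Finset.smul_sum, smul_smul]⟩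

lemma add_mem_coneOf {E : Type*} [AddCommGroup E] [Module ℝ E] {v : Fin n → E} {x y : E}
    (hx : x ∈ coneOf v) (hy : y ∈ coneOf v) : x + y ∈ coneOf v := by
  obtain ⟨lam, hlam, hx⟩ := hx
  obtain ⟨mu, hmu, hy⟩ := hy
  exact ⟨lam + mu, fun i => add_nonneg (hlam i) (hmu i), by
    simp [hx, hy, add_smul, Finset.sum_add_distrib]⟩

variable {m : ℕ}

/-- a representation with minimal coefficient sum exists -/
lemma exists_min_rep (a : Fin n → EuclideanSpace ℝ (Fin m)) (y : EuclideanSpace ℝ (Fin m))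
    (hy : y ∈ coneOf a) :
    ∃ κ : Fin n → ℝ, (∀ i, 0 ≤ κ i) ∧ y = ∑ i, κ i • a i ∧ ∑ i, κ i ≤ normA a y := by
  obtain ⟨κ₀, hκ₀, hyκ₀⟩ := hy
  set B : ℝ := ∑ i, κ₀ i with hB
  set K : Set (Fin n → ℝ) :=
    {κ | (∀ i, 0 ≤ κ i) ∧ (∑ i, κ i • a i) = y ∧ ∑ i, κ i ≤ B} with hK
  have hκ₀K : κ₀ ∈ K := ⟨hκ₀, hyκ₀.symm, le_refl _⟩
  have hsumcont : Continuous fun κ : Fin n → ℝ => ∑ i, κ i :=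
    continuous_finset_sum _ fun i _ => continuous_apply i
  have hclosed : IsClosed K := by
    have hKeq : K = (⋂ i, {κ : Fin n → ℝ | 0 ≤ κ i}) ∩
        ({κ : Fin n → ℝ | (∑ i, κ i • a i) = y} ∩ {κ : Fin n → ℝ | ∑ i, κ i ≤ B}) := by
      ext κ
      simp only [hK, Set.mem_setOf_eq, Set.mem_inter_iff, Set.mem_iInter]
    rw [hKeq]
    refine IsClosed.inter (isClosed_iInter fun i =>
        isClosed_le continuous_const (continuous_apply i)) (IsClosed.inter ?_ ?_)
    · exact isClosed_eq (continuous_finset_sum _ fun i _ =>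
        (continuous_apply i).smul continuous_const) continuous_const
    · exact isClosed_le hsumcont continuous_const
  have hsub : K ⊆ Set.Icc (0 : Fin n → ℝ) (fun _ => B) := by
    rintro κ ⟨h1, h2, h3⟩
    constructor
    · intro i; exact h1 i
    · intro i
      calc κ i ≤ ∑ j, κ j := Finset.single_le_sum (fun j _ => h1 j) (Finset.mem_univ i)
        _ ≤ B := h3
  have hcompact : IsCompact K := (isCompact_Icc).of_isClosed_subset hclosed hsub
  obtain ⟨κ, hκK, hmin⟩ := hcompact.exists_isMinOn ⟨κ₀, hκ₀K⟩ hsumcont.continuousOn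
  refine ⟨κ, hκK.1, hκK.2.1.symm, ?_⟩
  by_contra hgt
  push_neg at hgt
  have hne : {s | ∃ lam : Fin n → ℝ,
      (∀ i, 0 ≤ lam i) ∧ y = ∑ i, lam i • a i ∧ s = ∑ i, lam i}.Nonempty :=
    ⟨B, κ₀, hκ₀, hyκ₀, rfl⟩
  obtain ⟨s, ⟨lam, hlam, hylam, hslam⟩, hs⟩ := exists_lt_of_csInf_lt hne hgt
  have hlamK : lam ∈ K := ⟨hlam, hylam.symm, by
    rw [← hslam]; linarith [hκK.2.2]⟩
  have hle := (isMinOn_iff.mp hmin) lam hlamK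
  rw [← hslam] at hle
  linarith

/-- representation with sum of coefficients bounded by `μA * ‖x‖` -/
lemma exists_rep_le (a : Fin n → EuclideanSpace ℝ (Fin m)) (x : EuclideanSpace ℝ (Fin m))
    (hx : x ∈ coneOf a) (μA : ℝ)
    (hμ : IsGreatest {t | ∃ x ∈ coneOf a, ‖x‖ ≤ 1 ∧ t = normA a x} μA) :
    ∃ lam : Fin n → ℝ, (∀ i, 0 ≤ lam i) ∧ x = ∑ i, lam i • a i ∧ ∑ i, lam i ≤ μA * ‖x‖ := by
  by_cases hx0 : x = 0
  · exact ⟨0, fun i => le_refl 0, by simp [hx0], by simp [hx0]⟩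
  · have hnx : (0 : ℝ) < ‖x‖ := norm_pos_iff.mpr hx0
    set y : EuclideanSpace ℝ (Fin m) := ‖x‖⁻¹ • x with hy
    have hyC : y ∈ coneOf a := smul_mem_coneOf hx (by positivity)
    have hyn : ‖y‖ ≤ 1 := by
      rw [hy, norm_smul]
      simp [abs_of_nonneg (le_of_lt (inv_pos.mpr hnx)), inv_mul_cancel₀ (ne_of_gt hnx)]
    have hnormA : normA a y ≤ μA := hμ.2 ⟨y, hyC, hyn, rfl⟩
    obtain ⟨κ, hκ, hyκ, hκsum⟩ := exists_min_rep a y hyC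
    refine ⟨fun i => ‖x‖ * κ i, fun i => mul_nonneg (le_of_lt hnx) (hκ i), ?_, ?_⟩
    · have : ∑ i, (‖x‖ * κ i) • a i = ‖x‖ • ∑ i, κ i • a i := by
        rw [Finset.smul_sum]
        exact Finset.sum_congr rfl fun i _ => by rw [smul_smul]
      rw [this, ← hyκ, hy, smul_smul, mul_inv_cancel₀ (ne_of_gt hnx), one_smul]
    · rw [← Finset.mul_sum]
      calc ‖x‖ * ∑ i, κ i ≤ ‖x‖ * μA := by
            apply mul_le_mul_of_nonneg_left _ (le_of_lt hnx)
            exact le_trans hκsum hnormA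
        _ = μA * ‖x‖ := mul_comm _ _

/-- the scalar core inequality -/
lemma scalar_nonneg (ε P μ r σ c : ℝ) (hε : 0 < ε) (hP : 0 ≤ P) (hμ0 : 0 ≤ μ)
    (hr : 0 ≤ r) (hσ0 : 0 ≤ σ) (hσ : σ ≤ μ * r) (hc : c ≤ P * r)
    (hεD : ε * (μ ^ 2 + 2 * P * μ + 1) ≤ 1 - P ^ 2) :
    0 ≤ 1 - 2 * c + r ^ 2 - ε * (1 + σ) ^ 2 := by
  have hμr : 0 ≤ μ * r := mul_nonneg hμ0 hr
  have h1 : ε * (1 + σ) ^ 2 ≤ ε * (1 + μ * r) ^ 2 := by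
    have hsq : (1 + σ) ^ 2 ≤ (1 + μ * r) ^ 2 := by nlinarith
    exact mul_le_mul_of_nonneg_left hsq hε.le
  have h2 : ε * μ ^ 2 < 1 := by
    nlinarith [mul_nonneg (mul_nonneg hε.le hP) hμ0, sq_nonneg P]
  nlinarith [sq_nonneg ((1 - ε * μ ^ 2) * r - (P + ε * μ)), h1, h2,
    mul_nonneg (mul_nonneg hε.le hμ0) hr]

end ConeSepAux
set_option maxHeartbeats 2000000 in
/-- **Separation from a cone, deterministic core.**
Let `b, a_1, …, a_n` be unit vectors with `b ∉ C = cone{a_1, …, a_n}`, let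
`d = min_{x ∈ C} ‖b - x‖`, let `p` be the nearest point of `C` to `b`, and let
`μ_A = max{‖x‖_A : x ∈ C, ‖x‖ ≤ 1}`. Let `ε ∈ (0,1)` with
`ε ≤ d²/(μ_A² + 2·‖p‖·μ_A + 1)`, and let `T` be a linear map which distorts the squared
norms of `x - y` and `x + y` by at most a factor of `1 ± ε` for all
`x, y ∈ {b, a_1, …, a_n}`. Then `‖T b - T x‖² > 0` for every `x ∈ C`; in particular,
`T b ∉ cone{T (a_1), …, T (a_n)}`. -/
theorem cone_separation_deterministic {m k n : ℕ}
    (b : EuclideanSpace ℝ (Fin m)) (a : Fin n → EuclideanSpace ℝ (Fin m))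
    (hb : ‖b‖ = 1) (ha : ∀ i, ‖a i‖ = 1) (hbC : b ∉ coneOf a)
    (p : EuclideanSpace ℝ (Fin m)) (hp : p ∈ coneOf a)
    (hpmin : ∀ x ∈ coneOf a, ‖b - p‖ ≤ ‖b - x‖)
    (d μA : ℝ) (hd : d = ‖b - p‖)
    (hμ : IsGreatest {t | ∃ x ∈ coneOf a, ‖x‖ ≤ 1 ∧ t = normA a x} μA)
    (ε : ℝ) (hε : ε ∈ Set.Ioo (0 : ℝ) 1)
    (hεd : ε ≤ d ^ 2 / (μA ^ 2 + 2 * ‖p‖ * μA + 1))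
    (T : EuclideanSpace ℝ (Fin m) →ₗ[ℝ] EuclideanSpace ℝ (Fin k))
    (hT : ∀ x ∈ insert b (Set.range a), ∀ y ∈ insert b (Set.range a),
      ((1 - ε) * ‖x - y‖ ^ 2 ≤ ‖T (x - y)‖ ^ 2 ∧ ‖T (x - y)‖ ^ 2 ≤ (1 + ε) * ‖x - y‖ ^ 2) ∧
      ((1 - ε) * ‖x + y‖ ^ 2 ≤ ‖T (x + y)‖ ^ 2 ∧ ‖T (x + y)‖ ^ 2 ≤ (1 + ε) * ‖x + y‖ ^ 2)) :
    (∀ x ∈ coneOf a, 0 < ‖T b - T x‖ ^ 2) ∧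
      T b ∉ coneOf (fun i => T (a i)) := by
  obtain ⟨hε0, hε1⟩ := hε
  set S : Set (EuclideanSpace ℝ (Fin m)) := insert b (Set.range a) with hS
  have hbS : b ∈ S := Set.mem_insert _ _
  have haS : ∀ i, a i ∈ S := fun i => Set.mem_insert_of_mem _ ⟨i, rfl⟩
  have hunit : ∀ u ∈ S, ‖u‖ = 1 := by
    rintro u (rfl | ⟨i, rfl⟩)
    · exact hb
    · exact ha i
  -- basic distortion facts
  have key3 : ∀ u ∈ S, 1 - ε ≤ ‖T u‖ ^ 2 ∧ ‖T u‖ ^ 2 ≤ 1 + ε := by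
    intro u hu
    have h := (hT u hu u hu).2
    rw [map_add] at h
    have e1 : ‖u + u‖ ^ 2 = 4 := by
      rw [norm_add_sq_real, real_inner_self_eq_norm_sq, hunit u hu]; ring
    have e2 : ‖T u + T u‖ ^ 2 = 4 * ‖T u‖ ^ 2 := by
      rw [norm_add_sq_real, real_inner_self_eq_norm_sq]; ring
    rw [e1, e2] at h
    constructor <;> linarith [h.1, h.2]
  have key1 : ∀ u ∈ S, ∀ v ∈ S, (inner ℝ (T u) (T v) : ℝ) ≤ inner ℝ u v + ε := by
    intro u hu v hv
    have h := hT u hu v hv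
    have h1 := h.2.2; have h2 := h.1.1
    rw [map_add] at h1; rw [map_sub] at h2
    rw [norm_add_sq_real, norm_add_sq_real] at h1
    rw [norm_sub_sq_real, norm_sub_sq_real] at h2
    rw [hunit u hu, hunit v hv] at h1 h2
    nlinarith [h1, h2]
  have key2 : ∀ u ∈ S, ∀ v ∈ S, (inner ℝ u v : ℝ) - ε ≤ inner ℝ (T u) (T v) := by
    intro u hu v hv
    have h := hT u hu v hv
    have h1 := h.2.1; have h2 := h.1.2
    rw [map_add] at h1; rw [map_sub] at h2
    rw [norm_add_sq_real, norm_add_sq_real] at h1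
    rw [norm_sub_sq_real, norm_sub_sq_real] at h2
    rw [hunit u hu, hunit v hv] at h1 h2
    nlinarith [h1, h2]
  have key4 : ∀ u ∈ S, ∀ v ∈ S, 2 * (inner ℝ (T u) (T v) : ℝ) ≤
      ‖T u‖ ^ 2 + ‖T v‖ ^ 2 - (1 - ε) * (2 - 2 * inner ℝ u v) := by
    intro u hu v hv
    have h2 := (hT u hu v hv).1.1
    rw [map_sub] at h2
    rw [norm_sub_sq_real, norm_sub_sq_real] at h2
    rw [hunit u hu, hunit v hv] at h2
    nlinarith [h2]
  have key5 : ∀ u ∈ S, ∀ v ∈ S,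
      (1 - ε) * (2 + 2 * (inner ℝ u v : ℝ)) - ‖T u‖ ^ 2 - ‖T v‖ ^ 2 ≤
        2 * (inner ℝ (T u) (T v) : ℝ) := by
    intro u hu v hv
    have h1 := (hT u hu v hv).2.1
    rw [map_add] at h1
    rw [norm_add_sq_real, norm_add_sq_real] at h1
    rw [hunit u hu, hunit v hv] at h1
    nlinarith [h1]
  -- geometric facts about the nearest point
  have hvar : ∀ z ∈ coneOf a, (inner ℝ (b - p) (z - p) : ℝ) ≤ 0 := by
    intro z hz
    by_contra hpos
    push_neg at hpos
    set α : ℝ := inner ℝ (b - p) (z - p) with hα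
    have hzp : z - p ≠ 0 := by
      intro h0
      rw [h0, inner_zero_right] at hα
      exact (ne_of_gt hpos) hα
    have hw : (0 : ℝ) < ‖z - p‖ ^ 2 := pow_pos (norm_pos_iff.mpr hzp) 2
    set w : ℝ := ‖z - p‖ ^ 2 with hwdef
    set τ : ℝ := min 1 (α / w) with hτ
    have hτ0 : 0 < τ := lt_min one_pos (div_pos hpos hw)
    have hτ1 : τ ≤ 1 := min_le_left _ _
    have hτw : τ * w ≤ α := by
      calc τ * w ≤ (α / w) * w := mul_le_mul_of_nonneg_right (min_le_right _ _) hw.le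
        _ = α := by field_simp
    have hzC : (1 - τ) • p + τ • z ∈ coneOf a :=
      ConeSepAux.add_mem_coneOf (ConeSepAux.smul_mem_coneOf hp (by linarith))
        (ConeSepAux.smul_mem_coneOf hz hτ0.le)
    have hle := hpmin _ hzC
    have hsq : ‖b - p‖ ^ 2 ≤ ‖b - ((1 - τ) • p + τ • z)‖ ^ 2 := by
      apply pow_le_pow_left₀ (norm_nonneg _) hle
    have hrw : b - ((1 - τ) • p + τ • z) = (b - p) - τ • (z - p) := by
      rw [sub_smul, smul_sub, one_smul]; abel
    have hexp : ‖(b - p) - τ • (z - p)‖ ^ 2 = ‖b - p‖ ^ 2 - 2 * (τ * α) + τ ^ 2 * w := by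
      rw [norm_sub_sq_real, real_inner_smul_right, norm_smul, Real.norm_eq_abs,
        abs_of_pos hτ0, mul_pow, ← hα, ← hwdef]
    rw [hrw, hexp] at hsq
    nlinarith [hsq, mul_le_mul_of_nonneg_left hτw hτ0.le, mul_pos hτ0 hpos]
  have hbp_le : (inner ℝ (b - p) p : ℝ) ≤ 0 := by
    have h := hvar ((2 : ℝ) • p) (ConeSepAux.smul_mem_coneOf hp (by norm_num))
    have : (2 : ℝ) • p - p = p := by
      rw [two_smul]; abel
    rwa [this] at h
  have hbp_ge : (0 : ℝ) ≤ inner ℝ (b - p) p := by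
    have h := hvar 0 (ConeSepAux.zero_mem_coneOf a)
    rw [zero_sub, inner_neg_right] at h
    linarith
  -- ε * D ≤ d ^ 2  and  d ^ 2 ≤ 1 - ‖p‖ ^ 2
  have hμ0 : 0 ≤ μA := by
    obtain ⟨x₀, hx₀C, hx₀n, hx₀⟩ := hμ.1
    rw [hx₀]
    apply Real.sInf_nonneg
    rintro s ⟨lam, hlam, -, rfl⟩
    exact Finset.sum_nonneg fun i _ => hlam i
  have hD1 : (1 : ℝ) ≤ μA ^ 2 + 2 * ‖p‖ * μA + 1 := by
    nlinarith [sq_nonneg μA, mul_nonneg (norm_nonneg p) hμ0]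
  have hεD : ε * (μA ^ 2 + 2 * ‖p‖ * μA + 1) ≤ d ^ 2 := by
    rw [le_div_iff₀ (by linarith : (0:ℝ) < μA ^ 2 + 2 * ‖p‖ * μA + 1)] at hεd
    exact hεd
  have hd2 : d ^ 2 ≤ 1 - ‖p‖ ^ 2 := by
    have hbp : (inner ℝ b p : ℝ) - ‖p‖ ^ 2 = inner ℝ (b - p) p := by
      rw [inner_sub_left, real_inner_self_eq_norm_sq]
    rw [hd, norm_sub_sq_real, hb]
    nlinarith [hbp_ge, hbp]
  have hεD' : ε * (μA ^ 2 + 2 * ‖p‖ * μA + 1) ≤ 1 - ‖p‖ ^ 2 := le_trans hεD hd2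
  -- the main estimate, for a fixed point of the cone
  have part1 : ∀ x ∈ coneOf a, 0 < ‖T b - T x‖ ^ 2 := by
    intro x hx
    obtain ⟨lam, hlam, hxrep, hlsum⟩ := ConeSepAux.exists_rep_le a x hx μA hμ
    set σ : ℝ := ∑ i, lam i with hσdef
    have hσ0 : 0 ≤ σ := Finset.sum_nonneg fun i _ => hlam i
    set δ : Fin n → ℝ := fun i => ‖T (a i)‖ ^ 2 - (1 - ε) with hδ
    have hδ0 : ∀ i, 0 ≤ δ i := by
      intro i
      have := (key3 (a i) (haS i)).1
      simp only [hδ]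
      linarith
    have hβi : ∀ i, ‖T (a i)‖ ^ 2 = (1 - ε) + δ i := by
      intro i; simp only [hδ]; ring
    -- sum identities
    have hTx : T x = ∑ i, lam i • T (a i) := by
      rw [hxrep, map_sum]
      exact Finset.sum_congr rfl fun i _ => map_smul T _ _
    have id1 : (inner ℝ (T b) (T x) : ℝ) = ∑ i, lam i * inner ℝ (T b) (T (a i)) := by
      rw [hTx, inner_sum]
      exact Finset.sum_congr rfl fun i _ => real_inner_smul_right _ _ _
    have id2 : ‖T x‖ ^ 2 = ∑ i, ∑ j, lam i * (lam j * inner ℝ (T (a i)) (T (a j))) := by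
      rw [← real_inner_self_eq_norm_sq, hTx, sum_inner]
      refine Finset.sum_congr rfl fun i _ => ?_
      rw [real_inner_smul_left, inner_sum, Finset.mul_sum]
      exact Finset.sum_congr rfl fun j _ => by rw [real_inner_smul_right]
    have idc : (inner ℝ b x : ℝ) = ∑ i, lam i * inner ℝ b (a i) := by
      rw [hxrep, inner_sum]
      exact Finset.sum_congr rfl fun i _ => real_inner_smul_right _ _ _
    have idx : ‖x‖ ^ 2 = ∑ i, ∑ j, lam i * (lam j * inner ℝ (a i) (a j)) := by
      conv_lhs => rw [← real_inner_self_eq_norm_sq, hxrep]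
      rw [sum_inner]
      refine Finset.sum_congr rfl fun i _ => ?_
      rw [real_inner_smul_left, inner_sum, Finset.mul_sum]
      exact Finset.sum_congr rfl fun j _ => by rw [real_inner_smul_right]
    have idQ : ‖T b - T x‖ ^ 2 = ‖T b‖ ^ 2 - 2 * inner ℝ (T b) (T x) + ‖T x‖ ^ 2 :=
      norm_sub_sq_real _ _
    have idB : ‖b - x‖ ^ 2 = 1 - 2 * inner ℝ b x + ‖x‖ ^ 2 := by
      rw [norm_sub_sq_real, hb]; ring
    -- scalar geometry: `⟪b,x⟫ ≤ ‖p‖ ‖x‖`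
    have hcx : (inner ℝ b x : ℝ) ≤ ‖p‖ * ‖x‖ := by
      have h1 := hvar x hx
      have h2 := real_inner_le_norm p x
      have hexp : (inner ℝ (b - p) (x - p) : ℝ)
          = inner ℝ b x - inner ℝ b p - inner ℝ p x + ‖p‖ ^ 2 := by
        rw [inner_sub_left, inner_sub_right, inner_sub_right, real_inner_self_eq_norm_sq]
        ring
      have hbp2 : (inner ℝ (b - p) p : ℝ) = inner ℝ b p - ‖p‖ ^ 2 := by
        rw [inner_sub_left, real_inner_self_eq_norm_sq]
      linarith [h1, hbp_le]
    have hN : 0 ≤ ‖b - x‖ ^ 2 - ε * (1 + σ) ^ 2 := by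
      have := ConeSepAux.scalar_nonneg ε ‖p‖ μA ‖x‖ σ (inner ℝ b x) hε0 (norm_nonneg p)
        hμ0 (norm_nonneg x) hσ0 hlsum hcx hεD'
      rw [idB]; linarith
    -- Inequality I
    have sumU : ∑ i, lam i * (inner ℝ (T b) (T (a i)) : ℝ)
        ≤ (∑ i, lam i * inner ℝ b (a i)) + ε * σ := by
      calc ∑ i, lam i * (inner ℝ (T b) (T (a i)) : ℝ)
          ≤ ∑ i, lam i * ((inner ℝ b (a i) : ℝ) + ε) :=
            Finset.sum_le_sum fun i _ =>
              mul_le_mul_of_nonneg_left (key1 b hbS (a i) (haS i)) (hlam i)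
        _ = (∑ i, lam i * inner ℝ b (a i)) + ε * σ := by
            rw [hσdef, Finset.mul_sum, ← Finset.sum_add_distrib]
            exact Finset.sum_congr rfl fun i _ => by ring
    have sumL : (∑ i, ∑ j, lam i * (lam j * (inner ℝ (a i) (a j) : ℝ)))
        - ε * (σ * σ) + ∑ i, (lam i) ^ 2 * δ i
        ≤ ∑ i, ∑ j, lam i * (lam j * inner ℝ (T (a i)) (T (a j))) := by
      have per : ∀ i j, lam i * (lam j * (inner ℝ (a i) (a j) : ℝ)) - ε * (lam i * lam j)
          + (if j = i then (lam i) ^ 2 * δ i else 0)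
          ≤ lam i * (lam j * inner ℝ (T (a i)) (T (a j))) := by
        intro i j
        by_cases hij : j = i
        · subst hij
          rw [if_pos rfl]
          have e1 : (inner ℝ (a j) (a j) : ℝ) = 1 := by
            rw [real_inner_self_eq_norm_sq, ha j]; norm_num
          have e2 : (inner ℝ (T (a j)) (T (a j)) : ℝ) = (1 - ε) + δ j := by
            rw [real_inner_self_eq_norm_sq, hβi j]
          rw [e1, e2]
          exact le_of_eq (by ring)
        · rw [if_neg hij, add_zero]
          have h := key2 (a i) (haS i) (a j) (haS j)
          have h8 := mul_le_mul_of_nonneg_left h (mul_nonneg (hlam i) (hlam j))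
          have h9 : lam i * lam j * ((inner ℝ (a i) (a j) : ℝ) - ε)
              = lam i * (lam j * (inner ℝ (a i) (a j) : ℝ)) - ε * (lam i * lam j) := by ring
          have h10 : lam i * lam j * (inner ℝ (T (a i)) (T (a j)) : ℝ)
              = lam i * (lam j * (inner ℝ (T (a i)) (T (a j)) : ℝ)) := by ring
          rw [h9, h10] at h8
          linarith [h8]
      have e3 : ∑ i, ∑ j, (lam i * (lam j * (inner ℝ (a i) (a j) : ℝ)) - ε * (lam i * lam j)
          + (if j = i then (lam i) ^ 2 * δ i else 0))
          = (∑ i, ∑ j, lam i * (lam j * (inner ℝ (a i) (a j) : ℝ)))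
            - ε * (σ * σ) + ∑ i, (lam i) ^ 2 * δ i := by
        have e4 : ∀ i : Fin n, ∑ j, (if j = i then (lam i) ^ 2 * δ i else 0)
            = (lam i) ^ 2 * δ i := by
          intro i
          rw [Finset.sum_ite_eq' Finset.univ i (fun _ => (lam i) ^ 2 * δ i),
            if_pos (Finset.mem_univ i)]
        have e5 : ∑ i, ∑ j, ε * (lam i * lam j) = ε * (σ * σ) := by
          rw [hσdef, Finset.sum_mul_sum, Finset.mul_sum]
          exact Finset.sum_congr rfl fun i _ => by rw [Finset.mul_sum]
        have e6 : ∀ i : Fin n, ∑ j, (lam i * (lam j * (inner ℝ (a i) (a j) : ℝ))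
            - ε * (lam i * lam j) + (if j = i then (lam i) ^ 2 * δ i else 0))
            = (∑ j, lam i * (lam j * (inner ℝ (a i) (a j) : ℝ)))
              - (∑ j, ε * (lam i * lam j)) + (lam i) ^ 2 * δ i := by
          intro i
          rw [Finset.sum_add_distrib, Finset.sum_sub_distrib, e4 i]
        rw [Finset.sum_congr rfl fun i _ => e6 i, Finset.sum_add_distrib,
          Finset.sum_sub_distrib, e5]
      calc (∑ i, ∑ j, lam i * (lam j * (inner ℝ (a i) (a j) : ℝ))) - ε * (σ * σ)
            + ∑ i, (lam i) ^ 2 * δ i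
          = ∑ i, ∑ j, (lam i * (lam j * (inner ℝ (a i) (a j) : ℝ)) - ε * (lam i * lam j)
            + (if j = i then (lam i) ^ 2 * δ i else 0)) := e3.symm
        _ ≤ ∑ i, ∑ j, lam i * (lam j * inner ℝ (T (a i)) (T (a j))) :=
            Finset.sum_le_sum fun i _ => Finset.sum_le_sum fun j _ => per i j
    have hexp2 : ε * (1 + σ) ^ 2 = ε + 2 * (ε * σ) + ε * (σ * σ) := by ring
    have ineqI : ‖b - x‖ ^ 2 - ε * (1 + σ) ^ 2 + (‖T b‖ ^ 2 - (1 - ε))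
        + ∑ i, (lam i) ^ 2 * δ i ≤ ‖T b - T x‖ ^ 2 := by
      rw [idQ, id1, id2, idB, idc, idx]
      linarith [sumU, sumL, hexp2]
    -- conclude by contradiction
    by_contra hQ
    push_neg at hQ
    have hQ0 : ‖T b - T x‖ ^ 2 = 0 := le_antisymm hQ (by positivity)
    have h5 : 0 ≤ ‖T b‖ ^ 2 - (1 - ε) := by linarith [(key3 b hbS).1]
    have h6 : 0 ≤ ∑ i, (lam i) ^ 2 * δ i :=
      Finset.sum_nonneg fun i _ => mul_nonneg (sq_nonneg _) (hδ0 i)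
    have hb0 : ‖T b‖ ^ 2 = 1 - ε := by linarith
    have hS0 : ∑ i, (lam i) ^ 2 * δ i = 0 := by linarith
    have hld : ∀ i, lam i * δ i = 0 := by
      intro i
      have h7 := (Finset.sum_eq_zero_iff_of_nonneg
        (fun i _ => mul_nonneg (sq_nonneg (lam i)) (hδ0 i))).mp hS0 i (Finset.mem_univ i)
      rcases mul_eq_zero.mp h7 with h | h
      · rw [pow_eq_zero_iff (two_ne_zero)] at h
        rw [h, zero_mul]
      · rw [h, mul_zero]
    -- refined bounds
    have finU : ∑ i, lam i * (inner ℝ (T b) (T (a i)) : ℝ)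
        ≤ (1 - ε) * ∑ i, lam i * inner ℝ b (a i) := by
      rw [Finset.mul_sum]
      refine Finset.sum_le_sum fun i _ => ?_
      have h4 := key4 b hbS (a i) (haS i)
      rw [hb0, hβi i] at h4
      have h4' : (inner ℝ (T b) (T (a i)) : ℝ) ≤ (1 - ε) * inner ℝ b (a i) + δ i / 2 := by
        ring_nf at h4 ⊢
        linarith [h4]
      have h8 := mul_le_mul_of_nonneg_left h4' (hlam i)
      have h9 : lam i * ((1 - ε) * (inner ℝ b (a i) : ℝ) + δ i / 2)
          = (1 - ε) * (lam i * (inner ℝ b (a i) : ℝ)) + (lam i * δ i) / 2 := by ring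
      rw [h9, hld i] at h8
      linarith [h8]
    have finL : (1 - ε) * ∑ i, ∑ j, lam i * (lam j * (inner ℝ (a i) (a j) : ℝ))
        ≤ ∑ i, ∑ j, lam i * (lam j * inner ℝ (T (a i)) (T (a j))) := by
      rw [Finset.mul_sum]
      refine Finset.sum_le_sum fun i _ => ?_
      rw [Finset.mul_sum]
      refine Finset.sum_le_sum fun j _ => ?_
      have h5' := key5 (a i) (haS i) (a j) (haS j)
      rw [hβi i, hβi j] at h5'
      have h5'' : (1 - ε) * (inner ℝ (a i) (a j) : ℝ) - δ i / 2 - δ j / 2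
          ≤ (inner ℝ (T (a i)) (T (a j)) : ℝ) := by
        ring_nf at h5' ⊢
        linarith [h5']
      have h8 := mul_le_mul_of_nonneg_left h5'' (mul_nonneg (hlam i) (hlam j))
      have z1 : lam i * lam j * δ i = lam j * (lam i * δ i) := by ring
      have z2 : lam i * lam j * δ j = lam i * (lam j * δ j) := by ring
      rw [hld i, mul_zero] at z1
      rw [hld j, mul_zero] at z2
      have h9 : lam i * lam j * ((1 - ε) * (inner ℝ (a i) (a j) : ℝ) - δ i / 2 - δ j / 2)
          = (1 - ε) * (lam i * (lam j * (inner ℝ (a i) (a j) : ℝ)))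
            - (lam i * lam j * δ i) / 2 - (lam i * lam j * δ j) / 2 := by ring
      have h10 : lam i * lam j * (inner ℝ (T (a i)) (T (a j)) : ℝ)
          = lam i * (lam j * (inner ℝ (T (a i)) (T (a j)) : ℝ)) := by ring
      rw [h9, h10, z1, z2] at h8
      linarith [h8]
    have hbx : (0 : ℝ) < ‖b - x‖ ^ 2 := by
      have hne : b - x ≠ 0 := by
        intro h0
        exact hbC (by rwa [sub_eq_zero.mp h0])
      exact pow_pos (norm_pos_iff.mpr hne) 2
    rw [idQ, id1, id2] at hQ0
    rw [idB, idc, idx] at hbx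
    have hprod := mul_pos (show (0:ℝ) < 1 - ε by linarith) hbx
    have hexp3 : (1 - ε) * (1 - 2 * (∑ i, lam i * (inner ℝ b (a i) : ℝ))
          + ∑ i, ∑ j, lam i * (lam j * (inner ℝ (a i) (a j) : ℝ)))
        = (1 - ε) - 2 * ((1 - ε) * ∑ i, lam i * (inner ℝ b (a i) : ℝ))
          + (1 - ε) * ∑ i, ∑ j, lam i * (lam j * (inner ℝ (a i) (a j) : ℝ)) := by ring
    rw [hexp3] at hprod
    linarith [finU, finL, hQ0, hb0, hprod]
  refine ⟨part1, ?_⟩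
  rintro ⟨lam, hlam, hTb⟩
  have hxC : (∑ i, lam i • a i) ∈ coneOf a := ⟨lam, hlam, rfl⟩
  have hTx : T (∑ i, lam i • a i) = ∑ i, lam i • T (a i) := by
    rw [map_sum]
    exact Finset.sum_congr rfl fun i _ => map_smul T _ _
  have h0 : T b - T (∑ i, lam i • a i) = 0 := by
    rw [hTx, ← hTb]
    exact sub_self _
  have := part1 _ hxC
  rw [h0] at this
  simp at this
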